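/- Fix m ≥ 0 and write R(A) := √(A/(4π)). Then, as A → ∞, Vol_m(R(A)) = (1/2)A − π log A + ( V_m + π(1 + log π) ) − 8π^(3/2) m A^(−1/2) − 3π² A^(−1) + 16π^(5/2) m A^(−3/2) + O(A^(−2)); that is, there exist C, A₀ > 0 such that for all A ≥ A₀ the difference between the two sides is at most C A^(−2) in absolute value. -/

import Mathlib

open Real MeasureTheory Filter Set Topology

/-- Volume of the centered coordinate ball of radius `R` in hyperbolic space. -/
noncomputable def hypVol (R : ℝ) : ℝ :=
  4 * π * ∫ s in (0:ℝ)..R, s ^ 2 / Real.sqrt (1 + s ^ 2)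

/-- Volume of the centered coordinate ball of radius `R` in
Schwarzschild-anti-deSitter of mass `m`. -/
noncomputable def sAdSVol (m R : ℝ) : ℝ :=
  4 * π * ∫ s in (2 * m)..R, s ^ 2 / Real.sqrt (1 + s ^ 2 - 2 * m / s)

/-- The renormalized volume `V_m = lim_{R→∞} (Vol_m(R) - Vol₀(R))` of
Schwarzschild-anti-deSitter of mass `m`. -/
noncomputable def renormVol (m : ℝ) : ℝ :=
  limUnder atTop (fun R => sAdSVol m R - hypVol R)

/-! ### Auxiliary definitions -/

noncomputable def fm (m s : ℝ) : ℝ := s ^ 2 / Real.sqrt (1 + s ^ 2 - 2 * m / s)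
noncomputable def f0 (s : ℝ) : ℝ := s ^ 2 / Real.sqrt (1 + s ^ 2)
noncomputable def hh (m s : ℝ) : ℝ := m * s / ((1 + s ^ 2) * Real.sqrt (1 + s ^ 2))
noncomputable def Dm (m s : ℝ) : ℝ := fm m s - f0 s

/-! ### Closed form for `hypVol` -/

lemma sqrt1p_pos (s : ℝ) : 0 < Real.sqrt (1 + s ^ 2) :=
  Real.sqrt_pos.2 (by positivity)

lemma hasDerivAt_sqrt1p (s : ℝ) :
    HasDerivAt (fun t : ℝ => Real.sqrt (1 + t ^ 2)) (s / Real.sqrt (1 + s ^ 2)) s := by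
  have h : HasDerivAt (fun t : ℝ => 1 + t ^ 2) (2 * s) s := by
    simpa using ((hasDerivAt_pow 2 s).const_add 1)
  have := (Real.hasDerivAt_sqrt (x := 1 + s ^ 2) (by positivity)).comp s h
  refine this.congr_deriv ?_
  symm
  have := (sqrt1p_pos s).ne'
  field_simp

lemma hasDerivAt_F0 (s : ℝ) :
    HasDerivAt (fun t : ℝ => (t * Real.sqrt (1 + t ^ 2) - Real.arsinh t) / 2)
      (s ^ 2 / Real.sqrt (1 + s ^ 2)) s := by
  have h1 : HasDerivAt (fun t : ℝ => t * Real.sqrt (1 + t ^ 2))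
      (1 * Real.sqrt (1 + s ^ 2) + s * (s / Real.sqrt (1 + s ^ 2))) s :=
    (hasDerivAt_id s).mul (hasDerivAt_sqrt1p s)
  have h2 := Real.hasDerivAt_arsinh s
  have h := (h1.sub h2).div_const 2
  refine h.congr_deriv ?_
  symm
  have hp := (sqrt1p_pos s).ne'
  have hsq : Real.sqrt (1 + s ^ 2) * Real.sqrt (1 + s ^ 2) = 1 + s ^ 2 :=
    Real.mul_self_sqrt (by positivity)
  field_simp
  nlinarith [hsq]

lemma cont_f0 : Continuous f0 := by
  apply Continuous.div (by continuity) (by fun_prop)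
  exact fun s => (sqrt1p_pos s).ne'

lemma hypVol_eq (R : ℝ) :
    hypVol R = 2 * π * (R * Real.sqrt (1 + R ^ 2) - Real.arsinh R) := by
  rw [hypVol, intervalIntegral.integral_eq_sub_of_hasDerivAt
    (fun s _ => hasDerivAt_F0 s) (cont_f0.intervalIntegrable 0 R)]
  simp [Real.arsinh_zero]
  ring

/-! ### Basic properties of the sAdS integrand -/

lemma expr_ge (m s : ℝ) (hm : 0 ≤ m) (hs : 2 * m ≤ s) :
    s ^ 2 ≤ 1 + s ^ 2 - 2 * m / s ∧ 1 + s ^ 2 - 2 * m / s ≤ 1 + s ^ 2 := by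
  rcases eq_or_lt_of_le (by linarith : (0:ℝ) ≤ s) with h | h
  · simp [← h]
  · have h1 : 2 * m / s ≤ 1 := by rw [div_le_one h]; linarith
    have h2 : 0 ≤ 2 * m / s := by positivity
    constructor <;> linarith

lemma contOn_fm (m : ℝ) (hm : 0 ≤ m) : ContinuousOn (fm m) (Ici (2 * m)) := by
  rcases eq_or_lt_of_le hm with h | h
  · have : fm m = fun s : ℝ => s ^ 2 / Real.sqrt (1 + s ^ 2) := by
      funext s; simp [fm, ← h]
    rw [this]
    apply Continuous.continuousOn
    apply Continuous.div (by continuity) (by fun_prop)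
    exact fun s => (sqrt1p_pos s).ne'
  · have hc : ContinuousOn (fun s : ℝ => 1 + s ^ 2 - 2 * m / s) (Ici (2 * m)) := by
      apply ContinuousOn.sub (by fun_prop)
      apply ContinuousOn.div continuousOn_const continuousOn_id
      intro s hs
      have hs' : (2:ℝ) * m ≤ s := hs
      intro h0; simp only [id_eq] at h0; rw [h0] at hs'; linarith
    apply ContinuousOn.div (by fun_prop) hc.sqrt
    intro s hs
    have h1 := (expr_ge m s hm hs).1
    have h2 : (0:ℝ) < s := by have hs' : (2:ℝ)*m ≤ s := hs; linarith
    exact (Real.sqrt_pos.2 (by nlinarith)).ne'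

lemma contOn_Dm (m : ℝ) (hm : 0 ≤ m) : ContinuousOn (Dm m) (Ici (2 * m)) :=
  (contOn_fm m hm).sub cont_f0.continuousOn

lemma cont_hh (m : ℝ) : Continuous (hh m) := by
  apply Continuous.div (by continuity)
  · fun_prop
  · intro s
    have h1 : (0:ℝ) < 1 + s ^ 2 := by positivity
    exact (mul_pos h1 (sqrt1p_pos s)).ne'

/-! ### The key pointwise estimate -/

lemma inv_sqrt_bounds {u : ℝ} (h0 : 0 ≤ u) (h1 : u ≤ 1/2) :
    1 + u/2 ≤ (Real.sqrt (1 - u))⁻¹ ∧ (Real.sqrt (1 - u))⁻¹ ≤ 1 + u/2 + u ^ 2 := by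
  set w := Real.sqrt (1 - u) with hw
  have hwpos : 0 < w := Real.sqrt_pos.2 (by linarith)
  have hw2 : w ^ 2 = 1 - u := Real.sq_sqrt (by linarith)
  have e1 : (w * (1 + u/2)) ^ 2 = (1 - u) * (1 + u/2) ^ 2 := by rw [mul_pow, hw2]
  have e2 : (w * (1 + u/2 + u ^ 2)) ^ 2 = (1 - u) * (1 + u/2 + u ^ 2) ^ 2 := by
    rw [mul_pow, hw2]
  have hu3 : u ^ 3 ≤ u ^ 2 * (1/2) := by nlinarith [sq_nonneg u]
  have hu5 : u ^ 5 ≤ u ^ 2 * (1/8) := by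
    nlinarith [sq_nonneg u, sq_nonneg (u^2), pow_le_pow_left₀ h0 h1 3]
  constructor
  · rw [inv_eq_one_div, le_div_iff₀ hwpos]
    have h2 : ((1 + u/2) * w) ^ 2 ≤ 1 := by rw [mul_comm]; nlinarith [e1]
    nlinarith [mul_pos (by positivity : (0:ℝ) < 1 + u/2) hwpos]
  · rw [inv_eq_one_div, div_le_iff₀ hwpos]
    have h2 : 1 ≤ ((1 + u/2 + u ^ 2) * w) ^ 2 := by rw [mul_comm]; nlinarith [e2]
    nlinarith [mul_pos (by positivity : (0:ℝ) < 1 + u/2 + u ^ 2) hwpos]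

lemma D_est (m s : ℝ) (hm : 0 ≤ m) (h2m : 2 * m ≤ s) (hs1 : 1 ≤ s) :
    |Dm m s - hh m s| ≤ 4 * m ^ 2 / s ^ 5 := by
  have hs0 : 0 < s := by linarith
  have hzpos : 0 < Real.sqrt (1 + s ^ 2) := sqrt1p_pos s
  have hz2 : Real.sqrt (1 + s ^ 2) ^ 2 = 1 + s ^ 2 := Real.sq_sqrt (by positivity)
  have hzs : s ≤ Real.sqrt (1 + s ^ 2) := by
    rw [show (1:ℝ) + s ^ 2 = s^2 + 1 by ring]
    nlinarith [Real.sq_sqrt (show (0:ℝ) ≤ s^2+1 by positivity), Real.sqrt_nonneg (s^2+1)]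
  set z := Real.sqrt (1 + s ^ 2) with hz
  set u := 2 * m / (s * (1 + s ^ 2)) with hu
  have hu0 : 0 ≤ u := by positivity
  have huhalf : u ≤ 1/2 := by
    rw [hu, div_le_iff₀ (by positivity)]; nlinarith
  have hwpos : 0 < Real.sqrt (1 - u) := Real.sqrt_pos.2 (by linarith)
  have hw2 : Real.sqrt (1 - u) ^ 2 = 1 - u := Real.sq_sqrt (by linarith)
  set w := Real.sqrt (1 - u) with hw
  have hfac : 1 + s ^ 2 - 2 * m / s = (1 + s ^ 2) * (1 - u) := by
    rw [hu]; field_simp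
  have hy : Real.sqrt (1 + s ^ 2 - 2 * m / s) = z * w := by
    rw [hfac, Real.sqrt_mul (by positivity), hz, hw]
  obtain ⟨k1, k2⟩ := inv_sqrt_bounds hu0 huhalf
  rw [← hw] at k1 k2
  have habs : |w⁻¹ - 1 - u/2| ≤ u ^ 2 := by
    rw [abs_le]; constructor <;> nlinarith
  have hrw : Dm m s - hh m s = (s ^ 2 / z) * (w⁻¹ - 1 - u/2) := by
    unfold Dm fm f0 hh
    rw [hy, ← hz, hu]
    field_simp
  rw [hrw, abs_mul, abs_of_nonneg (by positivity : (0:ℝ) ≤ s^2/z)]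
  calc s ^ 2 / z * |w⁻¹ - 1 - u / 2| ≤ s ^ 2 / z * u ^ 2 := by
        exact mul_le_mul_of_nonneg_left habs (by positivity)
    _ = 4 * m ^ 2 / (z * (1 + s ^ 2) ^ 2) := by rw [hu]; field_simp; ring
    _ ≤ 4 * m ^ 2 / s ^ 5 := by
        apply div_le_div_of_nonneg_left (by positivity) (by positivity)
        nlinarith [sq_nonneg s, mul_le_mul_of_nonneg_left hzs (sq_nonneg ((1+s^2)))]

lemma hh_nonneg (m s : ℝ) (hm : 0 ≤ m) (hs : 0 ≤ s) : 0 ≤ hh m s := by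
  unfold hh
  have := sqrt1p_pos s
  positivity

lemma hh_le (m s : ℝ) (hm : 0 ≤ m) (hs1 : 1 ≤ s) : hh m s ≤ m / s ^ 2 := by
  have hs0 : (0:ℝ) < s := by linarith
  have hzs : s ≤ Real.sqrt (1 + s ^ 2) := by
    rw [show (1:ℝ) + s ^ 2 = s^2 + 1 by ring]
    nlinarith [Real.sq_sqrt (show (0:ℝ) ≤ s^2+1 by positivity), Real.sqrt_nonneg (s^2+1)]
  unfold hh
  rw [div_le_div_iff₀ (by positivity) (by positivity)]
  have h1 : s ^ 3 ≤ (1 + s ^ 2) * Real.sqrt (1 + s ^ 2) := by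
    nlinarith [sqrt1p_pos s]
  nlinarith [mul_le_mul_of_nonneg_left h1 hm]

lemma Dm_abs_le (m s : ℝ) (hm : 0 ≤ m) (h2m : 2 * m ≤ s) (hs1 : 1 ≤ s) :
    |Dm m s| ≤ (m + 4 * m ^ 2) / s ^ 2 := by
  have hs0 : (0:ℝ) < s := by linarith
  have h1 := D_est m s hm h2m hs1
  have h2 : |hh m s| ≤ m / s ^ 2 := by
    rw [abs_of_nonneg (hh_nonneg m s hm hs0.le)]; exact hh_le m s hm hs1
  have h3 : 4 * m ^ 2 / s ^ 5 ≤ 4 * m ^ 2 / s ^ 2 := by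
    apply div_le_div_of_nonneg_left (by positivity) (by positivity)
    exact pow_le_pow_right₀ hs1 (by norm_num)
  calc |Dm m s| = |(Dm m s - hh m s) + hh m s| := by ring_nf
    _ ≤ |Dm m s - hh m s| + |hh m s| := abs_add_le _ _
    _ ≤ 4 * m ^ 2 / s ^ 5 + m / s ^ 2 := add_le_add h1 h2
    _ ≤ (m + 4 * m ^ 2) / s ^ 2 := by
        rw [add_div]; linarith


lemma self_le_sqrt1p (s : ℝ) : s ≤ Real.sqrt (1 + s ^ 2) := by
  rcases le_or_gt s 0 with h | h
  · exact h.trans (Real.sqrt_nonneg _)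
  · nlinarith [Real.sq_sqrt (show (0:ℝ) ≤ 1 + s^2 by positivity), Real.sqrt_nonneg (1 + s^2)]

/-! ### Integrability and tail estimates -/

lemma rpow_neg_nat (s : ℝ) (hs : 0 ≤ s) (n : ℕ) : s ^ (-(n:ℝ)) = (s ^ n)⁻¹ := by
  rw [Real.rpow_neg hs, Real.rpow_natCast]

lemma intOn_Dm (m : ℝ) (hm : 0 ≤ m) : IntegrableOn (Dm m) (Ioi (2 * m)) := by
  set a := max (2 * m) 1 with ha
  have h2ma : 2 * m ≤ a := le_max_left _ _
  have ha1 : (1:ℝ) ≤ a := le_max_right _ _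
  rw [← Ioc_union_Ioi_eq_Ioi h2ma, integrableOn_union]
  constructor
  · exact (((contOn_Dm m hm).mono Icc_subset_Ici_self).integrableOn_Icc).mono_set
      Ioc_subset_Icc_self
  · have hmeas : AEStronglyMeasurable (Dm m) (volume.restrict (Ioi a)) :=
      ((contOn_Dm m hm).mono (fun x (hx : a < x) => (h2ma.trans hx.le : 2*m ≤ x))).aestronglyMeasurable
        measurableSet_Ioi
    apply Integrable.mono'
      ((integrableOn_Ioi_rpow_of_lt (by norm_num : (-2:ℝ) < -1)
        (lt_of_lt_of_le one_pos ha1)).const_mul (m + 4 * m ^ 2)) hmeas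
    rw [ae_restrict_iff' measurableSet_Ioi]
    refine ae_of_all _ (fun s hs => ?_)
    have hs1 : 1 ≤ s := le_of_lt (lt_of_le_of_lt ha1 hs)
    have h2ms : 2 * m ≤ s := h2ma.trans (le_of_lt hs)
    have h := Dm_abs_le m s hm h2ms hs1
    rw [Real.norm_eq_abs]
    refine h.trans (le_of_eq ?_)
    rw [show (-2:ℝ) = -((2:ℕ):ℝ) by norm_num, rpow_neg_nat s (by linarith) 2, div_eq_mul_inv]

lemma intOn_hh (m R : ℝ) (hm : 0 ≤ m) (hR1 : 1 ≤ R) : IntegrableOn (hh m) (Ioi R) := by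
  have hR0 : (0:ℝ) < R := lt_of_lt_of_le one_pos hR1
  apply Integrable.mono'
    ((integrableOn_Ioi_rpow_of_lt (by norm_num : (-2:ℝ) < -1) hR0).const_mul m)
    ((cont_hh m).aestronglyMeasurable.restrict)
  rw [ae_restrict_iff' measurableSet_Ioi]
  refine ae_of_all _ (fun s hs => ?_)
  have hs1 : 1 ≤ s := le_of_lt (lt_of_le_of_lt hR1 hs)
  rw [Real.norm_eq_abs, abs_of_nonneg (hh_nonneg m s hm (by linarith))]
  refine (hh_le m s hm hs1).trans (le_of_eq ?_)
  rw [show (-2:ℝ) = -((2:ℕ):ℝ) by norm_num, rpow_neg_nat s (by linarith) 2, div_eq_mul_inv]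

lemma integral_hh (m R : ℝ) (hm : 0 ≤ m) (hR1 : 1 ≤ R) :
    ∫ s in Ioi R, hh m s = m / Real.sqrt (1 + R ^ 2) := by
  have hder : ∀ x ∈ Ici R, HasDerivAt (fun s : ℝ => -(m / Real.sqrt (1 + s ^ 2))) (hh m x) x := by
    intro x _
    have h := (((hasDerivAt_const x m).div (hasDerivAt_sqrt1p x) (sqrt1p_pos x).ne')).neg
    refine h.congr_deriv ?_
    symm
    have hz := (sqrt1p_pos x).ne'
    have hz2 : Real.sqrt (1 + x ^ 2) ^ 2 = 1 + x ^ 2 := Real.sq_sqrt (by positivity)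
    unfold hh
    rw [hz2]
    field_simp
    ring
  have htend : Tendsto (fun s : ℝ => -(m / Real.sqrt (1 + s ^ 2))) atTop (𝓝 (-0)) := by
    apply Tendsto.neg
    apply Tendsto.div_atTop tendsto_const_nhds
    exact tendsto_atTop_mono self_le_sqrt1p tendsto_id
  rw [integral_Ioi_of_hasDerivAt_of_tendsto' hder (intOn_hh m R hm hR1) htend]
  ring

lemma tail_est (m R : ℝ) (hm : 0 ≤ m) (h2m : 2 * m ≤ R) (hR1 : 1 ≤ R) :
    |(∫ s in Ioi R, Dm m s) - m / Real.sqrt (1 + R ^ 2)| ≤ m ^ 2 * R ^ (-(4:ℝ)) := by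
  have hR0 : (0:ℝ) < R := lt_of_lt_of_le one_pos hR1
  have hDint : IntegrableOn (Dm m) (Ioi R) := (intOn_Dm m hm).mono_set (Ioi_subset_Ioi h2m)
  have hhint := intOn_hh m R hm hR1
  rw [← integral_hh m R hm hR1, ← integral_sub hDint hhint]
  have hgint : IntegrableOn (fun s : ℝ => 4 * m ^ 2 * s ^ (-5:ℝ)) (Ioi R) :=
    (integrableOn_Ioi_rpow_of_lt (by norm_num) hR0).const_mul _
  have hb : ∀ᵐ s ∂(volume.restrict (Ioi R)),
      ‖Dm m s - hh m s‖ ≤ 4 * m ^ 2 * s ^ (-5:ℝ) := by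
    rw [ae_restrict_iff' measurableSet_Ioi]
    refine ae_of_all _ (fun s hs => ?_)
    have hs1 : 1 ≤ s := le_of_lt (lt_of_le_of_lt hR1 hs)
    have h2ms : 2 * m ≤ s := h2m.trans (le_of_lt hs)
    rw [Real.norm_eq_abs]
    refine (D_est m s hm h2ms hs1).trans (le_of_eq ?_)
    rw [show (-5:ℝ) = -((5:ℕ):ℝ) by norm_num, rpow_neg_nat s (by linarith) 5, div_eq_mul_inv]
  calc |∫ s in Ioi R, (Dm m s - hh m s)|
      ≤ ∫ s in Ioi R, 4 * m ^ 2 * s ^ (-5:ℝ) := by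
        simpa [Real.norm_eq_abs] using norm_integral_le_of_norm_le hgint hb
    _ = 4 * m ^ 2 * ∫ s in Ioi R, s ^ (-5:ℝ) := integral_const_mul _ _
    _ = m ^ 2 * R ^ (-(4:ℝ)) := by
        rw [integral_Ioi_rpow_of_lt (by norm_num) hR0]
        norm_num
        ring

lemma sub_eq (m R : ℝ) (hm : 0 ≤ m) (hR : 2 * m ≤ R) :
    sAdSVol m R - hypVol R
      = 4 * π * ((∫ s in (2*m)..R, Dm m s) - ∫ s in (0:ℝ)..(2*m), f0 s) := by
  have hIfm : IntervalIntegrable (fm m) volume (2*m) R := by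
    apply ContinuousOn.intervalIntegrable
    rw [uIcc_of_le hR]
    exact (contOn_fm m hm).mono Icc_subset_Ici_self
  have hIf0 : IntervalIntegrable f0 volume (2*m) R := cont_f0.intervalIntegrable _ _
  have hsplit : ∫ s in (0:ℝ)..R, f0 s
      = (∫ s in (0:ℝ)..(2*m), f0 s) + ∫ s in (2*m)..R, f0 s :=
    (intervalIntegral.integral_add_adjacent_intervals (cont_f0.intervalIntegrable _ _) hIf0).symm
  have hDm : ∫ s in (2*m)..R, Dm m s
      = (∫ s in (2*m)..R, fm m s) - ∫ s in (2*m)..R, f0 s := by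
    simp only [Dm]
    exact intervalIntegral.integral_sub hIfm hIf0
  have e1 : sAdSVol m R = 4 * π * ∫ s in (2*m)..R, fm m s := rfl
  have e2 : hypVol R = 4 * π * ∫ s in (0:ℝ)..R, f0 s := rfl
  rw [e1, e2, hsplit, hDm]
  ring

lemma tendsto_sub (m : ℝ) (hm : 0 ≤ m) :
    Tendsto (fun R => sAdSVol m R - hypVol R) atTop
      (𝓝 (4 * π * ((∫ s in Ioi (2*m), Dm m s) - ∫ s in (0:ℝ)..(2*m), f0 s))) := by
  have h1 := intervalIntegral_tendsto_integral_Ioi (2*m) (intOn_Dm m hm) tendsto_id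
  have h2 := (h1.sub_const (∫ s in (0:ℝ)..(2*m), f0 s)).const_mul (4 * π)
  apply h2.congr'
  filter_upwards [Ici_mem_atTop (2*m)] with R hR
  exact (sub_eq m R hm hR).symm

lemma renormVol_eq (m : ℝ) (hm : 0 ≤ m) :
    renormVol m = 4 * π * ((∫ s in Ioi (2*m), Dm m s) - ∫ s in (0:ℝ)..(2*m), f0 s) := by
  rw [renormVol]
  exact (tendsto_sub m hm).limUnder_eq

lemma master (m R : ℝ) (hm : 0 ≤ m) (h2m : 2 * m ≤ R) :
    sAdSVol m R = hypVol R + renormVol m - 4 * π * ∫ s in Ioi R, Dm m s := by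
  have hsplit : ∫ s in Ioi (2*m), Dm m s
      = (∫ s in (2*m)..R, Dm m s) + ∫ s in Ioi R, Dm m s := by
    rw [intervalIntegral.integral_of_le h2m, ← setIntegral_union Ioc_disjoint_Ioi_same
      measurableSet_Ioi ((intOn_Dm m hm).mono_set Ioc_subset_Ioi_self)
      ((intOn_Dm m hm).mono_set (Ioi_subset_Ioi h2m)), Ioc_union_Ioi_eq_Ioi h2m]
  have h := sub_eq m R hm h2m
  rw [renormVol_eq m hm, hsplit]
  linarith [h]

lemma sqrt1p_bounds {x : ℝ} (h0 : 0 ≤ x) (h1 : x ≤ 1) :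
    1 + x/2 - x^2/8 ≤ Real.sqrt (1+x) ∧ Real.sqrt (1+x) ≤ 1 + x/2 - x^2/8 + x^3 := by
  have hw0 : 0 ≤ Real.sqrt (1+x) := Real.sqrt_nonneg _
  have hw2 : Real.sqrt (1+x) ^ 2 = 1 + x := Real.sq_sqrt (by linarith)
  set w := Real.sqrt (1+x)
  have hb0 : (0:ℝ) ≤ 1 + x/2 - x^2/8 := by nlinarith
  constructor
  · nlinarith [sq_nonneg (w - (1 + x/2 - x^2/8)), sq_nonneg (w + (1 + x/2 - x^2/8)), sq_nonneg x, sq_nonneg (x^2)]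
  · nlinarith [sq_nonneg (w - (1 + x/2 - x^2/8 + x^3)), sq_nonneg (w + (1 + x/2 - x^2/8 + x^3)), sq_nonneg x, sq_nonneg (x^2), pow_le_pow_left₀ h0 h1 3]

lemma inv_sqrt1p_bounds {x : ℝ} (h0 : 0 ≤ x) (h1 : x ≤ 1) :
    1 - x/2 ≤ (Real.sqrt (1+x))⁻¹ ∧ (Real.sqrt (1+x))⁻¹ ≤ 1 - x/2 + x^2 := by
  have hwpos : 0 < Real.sqrt (1+x) := Real.sqrt_pos.2 (by linarith)
  have hw2 : Real.sqrt (1+x) ^ 2 = 1 + x := Real.sq_sqrt (by linarith)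
  set w := Real.sqrt (1+x)
  constructor
  · rw [inv_eq_one_div, le_div_iff₀ hwpos]
    have h2 : ((1 - x/2) * w) ^ 2 ≤ 1 := by
      rw [mul_pow, hw2]
      nlinarith [mul_le_mul_of_nonneg_left h1 (sq_nonneg x)]
    nlinarith [mul_nonneg (by linarith : (0:ℝ) ≤ 1 - x/2) hwpos.le]
  · rw [inv_eq_one_div, div_le_iff₀ hwpos]
    have h2 : 1 ≤ ((1 - x/2 + x^2) * w) ^ 2 := by
      rw [mul_pow, hw2]
      nlinarith [pow_nonneg h0 3, pow_nonneg h0 5, sq_nonneg x]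
    nlinarith [mul_pos (by nlinarith : (0:ℝ) < 1 - x/2 + x^2) hwpos]

lemma log_bounds {t : ℝ} (h1 : 1 ≤ t) :
    t - 1 - (t-1)^2 ≤ Real.log t ∧ Real.log t ≤ t - 1 := by
  have ht0 : (0:ℝ) < t := by linarith
  refine ⟨?_, Real.log_le_sub_one_of_pos ht0⟩
  have h := Real.log_le_sub_one_of_pos (inv_pos.2 ht0)
  rw [Real.log_inv] at h
  have h2 : 1 - t⁻¹ ≤ Real.log t := by linarith
  refine le_trans ?_ h2
  nlinarith [pow_nonneg (show (0:ℝ) ≤ t - 1 by linarith) 3, mul_inv_cancel₀ ht0.ne', ht0]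

lemma sqrt1pR (R : ℝ) (hR : 1 ≤ R) :
    Real.sqrt (1 + R^2) = R * Real.sqrt (1 + 1/R^2) := by
  have hR0 : (0:ℝ) < R := by linarith
  rw [show 1 + R^2 = R^2 * (1 + 1/R^2) by field_simp; ring,
      Real.sqrt_mul (by positivity), Real.sqrt_sq hR0.le]

lemma x_mem (R : ℝ) (hR : 1 ≤ R) : 0 ≤ 1/R^2 ∧ 1/R^2 ≤ 1 := by
  have hR0 : (0:ℝ) < R := by linarith
  constructor
  · positivity
  · rw [div_le_one (by positivity)]; nlinarith

lemma est1 (R : ℝ) (hR : 1 ≤ R) :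
    |R * Real.sqrt (1 + R^2) - (R^2 + 1/2 - 1/(8*R^2))| ≤ 1/R^4 := by
  have hR0 : (0:ℝ) < R := by linarith
  obtain ⟨h0, h1⟩ := x_mem R hR
  set x := 1/R^2 with hx
  have hs := sqrt1p_bounds h0 h1
  have hx3 : R^2 * x^3 = 1/R^4 := by rw [hx]; field_simp
  have key : R * (R * Real.sqrt (1+x)) - (R^2 + 1/2 - 1/(8*R^2))
      = R^2 * (Real.sqrt (1+x) - (1 + x/2 - x^2/8)) := by
    rw [hx]; field_simp
  rw [sqrt1pR R hR, ← hx, key, abs_le]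
  have hR2 : (0:ℝ) ≤ R^2 := sq_nonneg R
  have h14 : (0:ℝ) ≤ 1/R^4 := by positivity
  constructor
  · nlinarith [mul_le_mul_of_nonneg_left hs.1 hR2]
  · nlinarith [mul_le_mul_of_nonneg_left hs.2 hR2]

lemma est2 (R : ℝ) (hR : 1 ≤ R) :
    |Real.arsinh R - (Real.log (2*R) + 1/(4*R^2))| ≤ 2/R^4 := by
  have hR0 : (0:ℝ) < R := by linarith
  obtain ⟨h0, h1⟩ := x_mem R hR
  set x := 1/R^2 with hx
  have hs := sqrt1p_bounds h0 h1
  set t : ℝ := (1 + Real.sqrt (1+x))/2 with ht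
  have ht1 : 1 ≤ t := by rw [ht]; nlinarith [hs.1]
  have hlog := log_bounds ht1
  have hsplit : Real.arsinh R = Real.log (2*R) + Real.log t := by
    have e0 : Real.arsinh R = Real.log (R + Real.sqrt (1+R^2)) := rfl
    rw [e0, sqrt1pR R hR, ← hx, show R + R * Real.sqrt (1+x) = (2*R) * t by rw [ht]; ring,
      Real.log_mul (by positivity) (by positivity)]
  have htu : t - 1 ≤ x/4 - x^2/16 + x^3/2 := by rw [ht]; linarith [hs.2]
  have htl : x/4 - x^2/16 ≤ t - 1 := by rw [ht]; linarith [hs.1]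
  have hlt : |Real.log t - x/4| ≤ 2*x^2 := by
    rw [abs_le]
    have htx : t - 1 ≤ x := by nlinarith
    constructor
    · nlinarith [hlog.1, sq_nonneg (t-1), mul_le_mul_of_nonneg_left htx (by linarith : (0:ℝ) ≤ t - 1)]
    · nlinarith [hlog.2]
  have hx2 : 2*x^2 = 2/R^4 := by rw [hx]; field_simp
  have hx4 : 1/(4*R^2) = x/4 := by rw [hx]; field_simp
  rw [hsplit, hx4]
  rw [show Real.log (2*R) + Real.log t - (Real.log (2*R) + x/4) = Real.log t - x/4 by ring]
  rw [← hx2]; exact hlt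

lemma est3 (R : ℝ) (hR : 1 ≤ R) :
    |(Real.sqrt (1 + R^2))⁻¹ - (1/R - 1/(2*R^3))| ≤ 1/R^4 := by
  have hR0 : (0:ℝ) < R := by linarith
  obtain ⟨h0, h1⟩ := x_mem R hR
  set x := 1/R^2 with hx
  have hs := inv_sqrt1p_bounds h0 h1
  have hwpos : 0 < Real.sqrt (1+x) := Real.sqrt_pos.2 (by linarith)
  have key : (R * Real.sqrt (1+x))⁻¹ = R⁻¹ * (Real.sqrt (1+x))⁻¹ := by
    rw [mul_inv]
  have e1 : R⁻¹ * (1 - x/2) = 1/R - 1/(2*R^3) := by rw [hx]; field_simp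
  have e2 : R⁻¹ * x^2 = 1/R^5 := by rw [hx]; field_simp
  rw [sqrt1pR R hR, ← hx, key, ← e1, abs_le]
  have hRinv : (0:ℝ) ≤ R⁻¹ := by positivity
  have h45 : 1/R^5 ≤ 1/R^4 := by
    apply div_le_div_of_nonneg_left one_pos.le (by positivity)
    exact pow_le_pow_right₀ hR (by norm_num)
  constructor
  · nlinarith [mul_le_mul_of_nonneg_left hs.1 hRinv, e2, h45]
  · nlinarith [mul_le_mul_of_nonneg_left hs.2 hRinv, e2, h45]


/-! ### Expansion in terms of the radius R -/

lemma expansion_R (m R : ℝ) (hm : 0 ≤ m) (h2m : 2*m ≤ R) (hR1 : 1 ≤ R) :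
    |sAdSVol m R - (2*π*R^2 + π - 2*π*Real.log (2*R) + renormVol m
        - 4*π*m/R - (3*π/4)/R^2 + 2*π*m/R^3)|
      ≤ (8*π + 4*π*(m + m^2)) / R^4 := by
  have hR0 : (0:ℝ) < R := lt_of_lt_of_le one_pos hR1
  have hπ : (0:ℝ) < π := pi_pos
  have e1 := est1 R hR1
  have e2 := est2 R hR1
  have e3 := est3 R hR1
  have e4 := tail_est m R hm h2m hR1
  have hr4 : R ^ (-(4:ℝ)) = (R^4)⁻¹ := by
    rw [show (-(4:ℝ)) = -((4:ℕ):ℝ) by norm_num, rpow_neg_nat R hR0.le 4]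
  rw [hr4] at e4
  rw [master m R hm h2m, hypVol_eq]
  set T := ∫ s in Ioi R, Dm m s with hT
  set a := R*Real.sqrt (1+R^2) - (R^2 + 1/2 - 1/(8*R^2)) with ha
  set b := Real.arsinh R - (Real.log (2*R) + 1/(4*R^2)) with hb
  set c := T - m/Real.sqrt (1+R^2) with hc
  set d := (Real.sqrt (1+R^2))⁻¹ - (1/R - 1/(2*R^3)) with hd
  have decomp : 2*π*(R*Real.sqrt (1 + R^2) - Real.arsinh R) + renormVol m - 4*π*T
      - (2*π*R^2 + π - 2*π*Real.log (2*R) + renormVol m - 4*π*m/R - (3*π/4)/R^2 + 2*π*m/R^3)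
      = 2*π*a - 2*π*b - 4*π*c - 4*π*m*d := by
    rw [ha, hb, hc, hd]
    field_simp
    ring
  rw [show (1:ℝ) + R^2 = 1 + R^2 from rfl] at decomp
  rw [decomp]
  have h1 : |2*π*a| ≤ 2*π*(1/R^4) := by
    rw [abs_mul, abs_of_nonneg (by positivity : (0:ℝ) ≤ 2*π)]
    exact mul_le_mul_of_nonneg_left e1 (by positivity)
  have h2 : |2*π*b| ≤ 2*π*(2/R^4) := by
    rw [abs_mul, abs_of_nonneg (by positivity : (0:ℝ) ≤ 2*π)]
    exact mul_le_mul_of_nonneg_left e2 (by positivity)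
  have h3 : |4*π*c| ≤ 4*π*(m^2*(R^4)⁻¹) := by
    rw [abs_mul, abs_of_nonneg (by positivity : (0:ℝ) ≤ 4*π)]
    exact mul_le_mul_of_nonneg_left e4 (by positivity)
  have h4 : |4*π*m*d| ≤ 4*π*m*(1/R^4) := by
    rw [abs_mul, abs_of_nonneg (by positivity : (0:ℝ) ≤ 4*π*m)]
    exact mul_le_mul_of_nonneg_left e3 (by positivity)
  calc |2*π*a - 2*π*b - 4*π*c - 4*π*m*d|
      ≤ |2*π*a - 2*π*b - 4*π*c| + |4*π*m*d| := abs_sub _ _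
    _ ≤ |2*π*a - 2*π*b| + |4*π*c| + |4*π*m*d| := by
        exact add_le_add_left (abs_sub _ _) _
    _ ≤ |2*π*a| + |2*π*b| + |4*π*c| + |4*π*m*d| := by
        exact add_le_add_left (add_le_add_left (abs_sub _ _) _) _
    _ ≤ 2*π*(1/R^4) + 2*π*(2/R^4) + 4*π*(m^2*(R^4)⁻¹) + 4*π*m*(1/R^4) := by
        exact add_le_add (add_le_add (add_le_add h1 h2) h3) h4
    _ ≤ (8*π + 4*π*(m + m^2)) / R^4 := by
        rw [div_eq_mul_inv, inv_eq_one_div]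
        have : (0:ℝ) < R^4 := by positivity
        field_simp
        nlinarith [sq_nonneg R, this]

/-! ### The main theorem -/

/-- expansion of the volume of the centered coordinate ball of
boundary area `A` in Schwarzschild-anti-deSitter of mass `m`, with error
`O(A⁻²)` as `A → ∞` for fixed `m ≥ 0`. -/
theorem sAdS_ball_volume_expansion (m : ℝ) (hm : 0 ≤ m) :
    ∃ C > (0:ℝ), ∃ A₀ > (0:ℝ), ∀ A ≥ A₀,
      |sAdSVol m (Real.sqrt (A / (4 * π)))
          - ((1 / 2) * A - π * Real.log A + (renormVol m + π * (1 + Real.log π))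
              - 8 * π ^ ((3:ℝ)/2) * m * A ^ (-(1:ℝ)/2)
              - 3 * π ^ 2 * A⁻¹
              + 16 * π ^ ((5:ℝ)/2) * m * A ^ (-(3:ℝ)/2))|
        ≤ C * A ^ (-(2:ℝ)) := by
  have hπ : (0:ℝ) < π := pi_pos
  have hm2 : 0 ≤ m + m^2 := by nlinarith
  have hKpos : 0 < 8*π + 4*π*(m + m^2) := by nlinarith [mul_nonneg hπ.le hm2]
  have hB1 : (1:ℝ) ≤ max (2*m) 1 := le_max_right _ _
  have hB2m : 2*m ≤ max (2*m) 1 := le_max_left _ _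
  have hBpos : (0:ℝ) < max (2*m) 1 := lt_of_lt_of_le one_pos hB1
  refine ⟨16*π^2*(8*π + 4*π*(m + m^2)), by positivity, 4*π*(max (2*m) 1)^2,
    by positivity, fun A hA => ?_⟩
  have hA0 : 0 < A := lt_of_lt_of_le (by positivity) hA
  obtain ⟨r, hrdef⟩ : ∃ r, Real.sqrt (A/(4*π)) = r := ⟨_, rfl⟩
  rw [show A / (4 * π) = A/(4*π) from rfl, hrdef]
  have hr2 : r^2 = A/(4*π) := by rw [← hrdef]; exact Real.sq_sqrt (by positivity)
  have hrB : max (2*m) 1 ≤ r := by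
    rw [← hrdef, show max (2*m) 1 = Real.sqrt ((max (2*m) 1)^2) from (Real.sqrt_sq hBpos.le).symm]
    apply Real.sqrt_le_sqrt
    rw [le_div_iff₀ (by positivity)]
    nlinarith [hA]
  have hr1 : 1 ≤ r := le_trans hB1 hrB
  have h2mr : 2*m ≤ r := le_trans hB2m hrB
  have hr0 : 0 < r := lt_of_lt_of_le one_pos hr1
  have hAr : A = 4*π*r^2 := by
    have h := hr2
    field_simp at h
    linarith
  have hsπ : Real.sqrt π * Real.sqrt π = π := Real.mul_self_sqrt hπ.le
  have hsπ0 : 0 < Real.sqrt π := Real.sqrt_pos.2 hπ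
  have hsA : Real.sqrt A = 2*Real.sqrt π*r := by
    rw [hAr, show 4*π*r^2 = (2*Real.sqrt π*r)^2 by nlinarith [hsπ]]
    exact Real.sqrt_sq (by positivity)
  have hA12 : A ^ (-(1:ℝ)/2) = (2*Real.sqrt π*r)⁻¹ := by
    rw [show (-(1:ℝ)/2) = -(1/2:ℝ) by norm_num, Real.rpow_neg hA0.le,
      ← Real.sqrt_eq_rpow, hsA]
  have hA32 : A ^ (-(3:ℝ)/2) = ((2*Real.sqrt π*r)^3)⁻¹ := by
    rw [show (-(3:ℝ)/2) = -((1/2:ℝ)*((3:ℕ):ℝ)) by norm_num, Real.rpow_neg hA0.le,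
      Real.rpow_mul hA0.le, Real.rpow_natCast, ← Real.sqrt_eq_rpow, hsA]
  have hA2 : A ^ (-(2:ℝ)) = (A^2)⁻¹ := by
    rw [show (-(2:ℝ)) = -((2:ℕ):ℝ) by norm_num, rpow_neg_nat A hA0.le 2]
  have hπ32 : π ^ ((3:ℝ)/2) = π * Real.sqrt π := by
    rw [show ((3:ℝ)/2) = 1 + 1/2 by norm_num, Real.rpow_add hπ, Real.rpow_one,
      ← Real.sqrt_eq_rpow]
  have hπ52 : π ^ ((5:ℝ)/2) = π^2 * Real.sqrt π := by
    rw [show ((5:ℝ)/2) = ((2:ℕ):ℝ) + 1/2 by norm_num, Real.rpow_add hπ,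
      ← Real.sqrt_eq_rpow, Real.rpow_natCast]
  have t1 : (1:ℝ)/2 * A = 2*π*r^2 := by rw [hAr]; ring
  have t2 : π * Real.log A = 2*π*Real.log (2*r) + π*Real.log π := by
    have hlog : Real.log A = 2*Real.log (2*r) + Real.log π := by
      rw [hAr, show 4*π*r^2 = (2*r)^2*π by ring,
        Real.log_mul (by positivity) hπ.ne', Real.log_pow]
      push_cast; ring
    rw [hlog]; ring
  have t3 : 8*π^((3:ℝ)/2)*m*A^(-(1:ℝ)/2) = 4*π*m/r := by
    rw [hπ32, hA12]
    field_simp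
    ring
  have t4 : 3*π^2*A⁻¹ = (3*π/4)/r^2 := by
    rw [hAr]; field_simp
  have t5 : 16*π^((5:ℝ)/2)*m*A^(-(3:ℝ)/2) = 2*π*m/r^3 := by
    rw [hπ52, hA32]
    field_simp
    linear_combination (-16*m) * hsπ
  have t6 : 16*π^2*(8*π + 4*π*(m + m^2))*A^(-(2:ℝ)) = (8*π + 4*π*(m + m^2))/r^4 := by
    rw [hA2, hAr]; field_simp; ring
  have main := expansion_R m r hm h2mr hr1
  have hEq : (1/2) * A - π * Real.log A + (renormVol m + π * (1 + Real.log π))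
      - 8 * π ^ ((3:ℝ)/2) * m * A ^ (-(1:ℝ)/2)
      - 3 * π ^ 2 * A⁻¹
      + 16 * π ^ ((5:ℝ)/2) * m * A ^ (-(3:ℝ)/2)
      = 2*π*r^2 + π - 2*π*Real.log (2*r) + renormVol m
        - 4*π*m/r - (3*π/4)/r^2 + 2*π*m/r^3 := by
    rw [show (1:ℝ)/2 * A = 2*π*r^2 from t1, t2, t3, t4, t5]
    ring
  rw [hEq, t6]
  exact main
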